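/- For ζ in the open unit disk, define A = ((2 + |ζ|² + √(4 + |ζ|⁴))/2)^{1/2} and B = ((2 + |ζ|² − √(4 + |ζ|⁴))/2)^{1/2} · conj(ζ)/|ζ| (with B = 0 when ζ = 0). Then the functions b(z) = z/(A − Bz) and a(z) = (1 − conj(ζ)z)/(A − Bz) satisfy |a(λ)|² + |b(λ)|² = 1 for every λ on the unit circle, and b(z)/a(z) = z/(1 − conj(ζ)z). -/

import Mathlib

open Complex Metric Real

/-- With `A = ((2 + |ζ|² + √(4 + |ζ|⁴))/2)^{1/2}` and
`B = ((2 + |ζ|² − √(4 + |ζ|⁴))/2)^{1/2} · conj ζ/|ζ|` (junk value `B = 0` when `ζ = 0`),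
the functions `b(z) = z/(A − Bz)` and `a(z) = (1 − conj ζ · z)/(A − Bz)` satisfy
`|a|² + |b|² = 1` on the unit circle and `b/a = z/(1 − conj ζ · z)` on the disk. -/
theorem stmt_4 (ζ : ℂ) (hζ : ζ ∈ ball (0 : ℂ) 1) (A B : ℂ)
    (hA : A = (Real.sqrt ((2 + ‖ζ‖ ^ 2 + Real.sqrt (4 + ‖ζ‖ ^ 4)) / 2) : ℝ))
    (hB : B = (Real.sqrt ((2 + ‖ζ‖ ^ 2 - Real.sqrt (4 + ‖ζ‖ ^ 4)) / 2) : ℝ) *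
      ((starRingEnd ℂ) ζ / (‖ζ‖ : ℂ))) :
    (∀ l : ℂ, ‖l‖ = 1 →
      ‖(1 - (starRingEnd ℂ) ζ * l) / (A - B * l)‖ ^ 2 + ‖l / (A - B * l)‖ ^ 2 = 1) ∧
    (∀ z ∈ ball (0 : ℂ) 1,
      (z / (A - B * z)) / ((1 - (starRingEnd ℂ) ζ * z) / (A - B * z))
        = z / (1 - (starRingEnd ℂ) ζ * z)) := by
  set r : ℝ := ‖ζ‖ with hr_def
  have hr : 0 ≤ r := norm_nonneg ζ
  set s : ℝ := Real.sqrt (4 + r ^ 4) with hs_def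
  have hs2 : s ^ 2 = 4 + r ^ 4 := Real.sq_sqrt (by positivity)
  have hs_ge : (2 : ℝ) ≤ s := by
    rw [hs_def]
    rw [show (2 : ℝ) = Real.sqrt 4 by
      rw [show (4 : ℝ) = 2 ^ 2 by norm_num, Real.sqrt_sq (by norm_num)]]
    exact Real.sqrt_le_sqrt (by nlinarith)
  have hs_le : s ≤ 2 + r ^ 2 := by
    rw [hs_def]
    calc Real.sqrt (4 + r ^ 4) ≤ Real.sqrt ((2 + r ^ 2) ^ 2) :=
          Real.sqrt_le_sqrt (by nlinarith)
      _ = 2 + r ^ 2 := Real.sqrt_sq (by positivity)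
  set a : ℝ := Real.sqrt ((2 + r ^ 2 + s) / 2) with ha_def
  set b : ℝ := Real.sqrt ((2 + r ^ 2 - s) / 2) with hb_def
  have ha2 : a ^ 2 = (2 + r ^ 2 + s) / 2 := Real.sq_sqrt (by positivity)
  have hb2 : b ^ 2 = (2 + r ^ 2 - s) / 2 := Real.sq_sqrt (by linarith)
  have ha_pos : 0 < a := Real.sqrt_pos.mpr (by positivity)
  have hb_nonneg : 0 ≤ b := Real.sqrt_nonneg _
  have hba : b < a := by
    rw [ha_def, hb_def]
    exact Real.sqrt_lt_sqrt (by linarith) (by linarith)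
  have hab : a * b = r := by
    rw [ha_def, hb_def, ← Real.sqrt_mul (by positivity),
      show (2 + r ^ 2 + s) / 2 * ((2 + r ^ 2 - s) / 2) = r ^ 2 by
        linear_combination (-1/4 : ℝ) * hs2]
    exact Real.sqrt_sq hr
  have hA' : A = (a : ℂ) := hA
  have hB' : B = (b : ℂ) * ((starRingEnd ℂ) ζ / (r : ℂ)) := hB
  have hBb : ‖B‖ ≤ b := by
    by_cases hz : ζ = 0
    · simp [hB', hz, hb_nonneg]
    · have hr0 : r ≠ 0 := by simpa [hr_def] using hz
      rw [hB', norm_mul, norm_div]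
      simp only [Complex.norm_real, RingHomIsometric.norm_map, Real.norm_eq_abs,
        _root_.abs_of_nonneg hb_nonneg, _root_.abs_of_nonneg hr]
      rw [← hr_def, div_self hr0, mul_one]
  have hD : ∀ z : ℂ, ‖z‖ ≤ 1 → A - B * z ≠ 0 := by
    intro z hz h
    have h1 : A = B * z := sub_eq_zero.mp h
    have hnA : ‖A‖ = a := by
      rw [hA', Complex.norm_real, Real.norm_eq_abs, _root_.abs_of_nonneg ha_pos.le]
    have hnB : ‖B * z‖ ≤ b := by
      rw [norm_mul]
      calc ‖B‖ * ‖z‖ ≤ b * 1 := by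
            apply mul_le_mul hBb hz (norm_nonneg z) hb_nonneg
        _ = b := mul_one b
    rw [h1] at hnA
    linarith [hnA ▸ hnB]
  -- complex algebraic facts
  have hr0C : ζ ≠ 0 → (r : ℂ) ≠ 0 := by
    intro hz
    simpa [hr_def] using hz
  have hF1 : A * B = (starRingEnd ℂ) ζ := by
    by_cases hz : ζ = 0
    · simp [hA', hB', hz]
    · have h0 := hr0C hz
      rw [hA', hB']
      field_simp
      rw [show (a : ℂ) * (b : ℂ) * (starRingEnd ℂ) ζ
          = ((a * b : ℝ) : ℂ) * (starRingEnd ℂ) ζ by push_cast; ring, hab]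
      ring
  have hF1c : A * (starRingEnd ℂ) B = ζ := by
    have := congrArg (starRingEnd ℂ) hF1
    simpa [hA', Complex.conj_ofReal, map_mul] using this
  have hzz : ζ * (starRingEnd ℂ) ζ = (r : ℂ) ^ 2 := by
    rw [Complex.mul_conj, Complex.normSq_eq_norm_sq]
    push_cast
    rw [← hr_def]
  have hF2 : A * A + B * (starRingEnd ℂ) B = 2 + (r : ℂ) ^ 2 := by
    by_cases hz : ζ = 0
    · have hrz : r = 0 := by simp [hr_def, hz]
      have hs4 : s = 2 := by
        rw [hs_def, hrz]; norm_num
      have hb0 : b = 0 := by rw [hb_def, hrz, hs4]; norm_num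
      have ha2' : a ^ 2 = 2 := by rw [ha2, hrz, hs4]; norm_num
      rw [hA', hB', hb0, hrz]
      push_cast
      rw [show (a : ℂ) * a = ((a ^ 2 : ℝ) : ℂ) by push_cast; ring, ha2']
      push_cast; ring
    · have h0 := hr0C hz
      rw [hA', hB']
      simp only [map_mul, map_div₀, Complex.conj_ofReal, Complex.conj_conj]
      have key : (b : ℂ) ^ 2 * ((starRingEnd ℂ) ζ * ζ) / ((r : ℂ) ^ 2) = (b : ℂ) ^ 2 := by
        rw [mul_comm ((starRingEnd ℂ) ζ) ζ, hzz]
        field_simp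
      have hsum : ((a : ℂ)) * a + (b : ℂ) ^ 2 = 2 + (r : ℂ) ^ 2 := by
        rw [show ((a : ℂ)) * a + (b : ℂ) ^ 2 = ((a ^ 2 + b ^ 2 : ℝ) : ℂ) by push_cast; ring]
        rw [show a ^ 2 + b ^ 2 = 2 + r ^ 2 by rw [ha2, hb2]; ring]
        push_cast; ring
      calc (a : ℂ) * a + (b : ℂ) * ((starRingEnd ℂ) ζ / r) * ((b : ℂ) * (ζ / r))
          = (a : ℂ) * a + (b : ℂ) ^ 2 * ((starRingEnd ℂ) ζ * ζ) / ((r : ℂ) ^ 2) := by ring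
        _ = (a : ℂ) * a + (b : ℂ) ^ 2 := by rw [key]
        _ = 2 + (r : ℂ) ^ 2 := hsum
  constructor
  · intro l hl
    have hl1 : l * (starRingEnd ℂ) l = 1 := by
      rw [Complex.mul_conj, Complex.normSq_eq_norm_sq, hl]
      norm_num
    have key : (A - B * l) * (starRingEnd ℂ) (A - B * l)
        = (1 - (starRingEnd ℂ) ζ * l) * (starRingEnd ℂ) (1 - (starRingEnd ℂ) ζ * l)
          + l * (starRingEnd ℂ) l := by
      have hAc : (starRingEnd ℂ) A = A := by rw [hA']; exact Complex.conj_ofReal _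
      simp only [map_sub, map_mul, map_one, Complex.conj_conj, hAc]
      linear_combination (-((starRingEnd ℂ) l)) * hF1c - l * hF1 + hF2
        + (B * (starRingEnd ℂ) B - ζ * (starRingEnd ℂ) ζ - 1) * hl1 - hzz
    have keyn : ‖A - B * l‖ ^ 2 = ‖1 - (starRingEnd ℂ) ζ * l‖ ^ 2 + ‖l‖ ^ 2 := by
      have := key
      rw [Complex.mul_conj, Complex.mul_conj, Complex.mul_conj] at this
      have h2 : Complex.normSq (A - B * l)
          = Complex.normSq (1 - (starRingEnd ℂ) ζ * l) + Complex.normSq l := by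
        exact_mod_cast this
      simpa [Complex.normSq_eq_norm_sq] using h2
    have hDl : A - B * l ≠ 0 := hD l hl.le
    have hDn : ‖A - B * l‖ ≠ 0 := norm_ne_zero_iff.mpr hDl
    rw [norm_div, norm_div, div_pow, div_pow, hl]
    rw [← add_div, keyn, hl]
    field_simp
  · intro z hz
    have hz1 : ‖z‖ < 1 := by simpa [mem_ball, dist_eq_norm] using hz
    have hDz : A - B * z ≠ 0 := hD z hz1.le
    by_cases h1 : 1 - (starRingEnd ℂ) ζ * z = 0
    · simp [h1]
    · rw [div_div_div_cancel_right₀ hDz]
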